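/- Let m, n ≥ 1 be integers and μ ≥ 1/2. Let ω = (ω₁, …, ω_m) ∈ ℂ^m and λ : ℕ → ℝ, and for τ ∈ ℤ^m, j ≥ 1 and 1 ≤ r ≤ m set σ_r(τ, j) := τ_r + ω_r λ_j and ‖σ(τ, j)‖ := max_{1 ≤ r ≤ m} |σ_r(τ, j)|. Suppose there exist σ > 1 and ε > 0 such that for every δ > 0 there exists (τ, j) ∈ ℤ^m × ℕ with 0 < ‖σ(τ, j)‖ < δ · exp(−ε(‖τ‖^{1/σ} + j^{1/(2nμ)})). Then there exist functions û, f̂₁, …, f̂_m : ℤ^m × ℕ → ℂ such that: (1) σ_r(τ, j) · û(τ, j) = f̂_r(τ, j) for all r, τ, j; (2) |f̂_r(τ, j)| ≤ exp(−ε(‖τ‖^{1/σ} + j^{1/(2nμ)})) for all r, τ, j; (3) û takes only the values 0 and 1, and the set {(τ, j) : û(τ, j) = 1} is infinite; (4) for every σ' > 1, every ε' > 0 and every C > 0, the estimate |û(τ, j)| ≤ C · exp(−ε'(‖τ‖^{1/σ'} + j^{1/(2nμ)})) fails for some (τ, j). -/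

import Mathlib

/-- Necessity part of the hypoellipticity criterion for time-independent systems,
in Fourier-coefficient form: failure of the Diophantine condition yields Fourier
coefficients û with values in {0,1}, infinitely many equal to 1 (hence no
Gelfand–Shilov decay), whose images f̂_r under the symbol all decay. -/
theorem stmt4 (m n : ℕ) (hm : 1 ≤ m) (hn : 1 ≤ n) (μ : ℝ) (hμ : 1 / 2 ≤ μ)
    (ω : Fin m → ℂ) (lam : ℕ → ℝ)
    (σ ε : ℝ) (hσ : 1 < σ) (hε : 0 < ε)
    (H : ∀ δ : ℝ, 0 < δ → ∃ (τ : Fin m → ℤ) (j : ℕ), 1 ≤ j ∧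
      0 < (⨆ r, ‖(τ r : ℂ) + ω r * lam j‖) ∧
      (⨆ r, ‖(τ r : ℂ) + ω r * lam j‖) <
        δ * Real.exp (-ε * ((⨆ r, |(τ r : ℝ)|) ^ (1 / σ) + (j : ℝ) ^ (1 / (2 * n * μ))))) :
    ∃ (u : (Fin m → ℤ) → ℕ → ℂ) (f : Fin m → (Fin m → ℤ) → ℕ → ℂ),
      (∀ (r : Fin m) (τ : Fin m → ℤ) (j : ℕ), ((τ r : ℂ) + ω r * lam j) * u τ j = f r τ j) ∧
      (∀ (r : Fin m) (τ : Fin m → ℤ) (j : ℕ),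
        ‖f r τ j‖ ≤
          Real.exp (-ε * ((⨆ r', |(τ r' : ℝ)|) ^ (1 / σ) + (j : ℝ) ^ (1 / (2 * n * μ))))) ∧
      ((∀ (τ : Fin m → ℤ) (j : ℕ), u τ j = 0 ∨ u τ j = 1) ∧
        {p : (Fin m → ℤ) × ℕ | u p.1 p.2 = 1}.Infinite) ∧
      (∀ σ' : ℝ, 1 < σ' → ∀ ε' : ℝ, 0 < ε' → ∀ C : ℝ, 0 < C →
        ∃ (τ : Fin m → ℤ) (j : ℕ), 1 ≤ j ∧
          ¬ ‖u τ j‖ ≤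
              C * Real.exp (-ε' * ((⨆ r, |(τ r : ℝ)|) ^ (1 / σ') + (j : ℝ) ^ (1 / (2 * n * μ))))) := by
  classical
  have hmne : Nonempty (Fin m) := ⟨⟨0, hm⟩⟩
  have hμ0 : (0:ℝ) < μ := lt_of_lt_of_le (by norm_num) hμ
  have hn1 : (1:ℝ) ≤ (n:ℝ) := by exact_mod_cast hn
  have hden : (0:ℝ) < 2 * (n:ℝ) * μ := by nlinarith
  set q : ℝ := 1 / (2 * (n:ℝ) * μ) with hqdef
  have hq0 : 0 < q := by positivity
  set N : ((Fin m → ℤ) × ℕ) → ℝ :=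
    fun p => ⨆ r, ‖(p.1 r : ℂ) + ω r * lam p.2‖ with hNdef
  set A : ((Fin m → ℤ) × ℕ) → ℝ :=
    fun p => (⨆ r', |(p.1 r' : ℝ)|) ^ (1 / σ) + (p.2 : ℝ) ^ q with hAdef
  set E : ((Fin m → ℤ) × ℕ) → ℝ := fun p => Real.exp (-ε * A p) with hEdef
  have hsup0 : ∀ τ : Fin m → ℤ, (0:ℝ) ≤ ⨆ r', |(τ r' : ℝ)| :=
    fun τ => Real.iSup_nonneg fun r => abs_nonneg _
  have hA0 : ∀ p, 0 ≤ A p := by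
    intro p
    have h1 : (0:ℝ) ≤ (⨆ r', |(p.1 r' : ℝ)|) ^ (1 / σ) := Real.rpow_nonneg (hsup0 p.1) _
    have h2 : (0:ℝ) ≤ (p.2 : ℝ) ^ q := Real.rpow_nonneg (Nat.cast_nonneg _) _
    simp only [hAdef]; linarith
  have hE0 : ∀ p, 0 < E p := fun p => Real.exp_pos _
  have hE1 : ∀ p, E p ≤ 1 := by
    intro p
    apply Real.exp_le_one_iff.mpr
    have := hA0 p
    nlinarith
  have key : ∀ δ : ℝ, 0 < δ → ∃ p : (Fin m → ℤ) × ℕ,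
      1 ≤ p.2 ∧ 0 < N p ∧ N p < δ * E p := by
    intro δ hδ
    obtain ⟨τ, j, hj, h1, h2⟩ := H δ hδ
    exact ⟨(τ, j), hj, h1, h2⟩
  -- Good points
  set Good : ((Fin m → ℤ) × ℕ) → Prop :=
    fun p => 1 ≤ p.2 ∧ 0 < N p ∧ N p < E p with hGdef
  have base : ∃ p, Good p := by
    obtain ⟨p, h1, h2, h3⟩ := key 1 one_pos
    exact ⟨p, h1, h2, by simpa using h3⟩
  have step : ∀ p, Good p → ∃ p', Good p' ∧ N p' < N p := by
    intro p hp
    obtain ⟨p', h1, h2, h3⟩ := key (N p) hp.2.1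
    have hNp1 : N p ≤ 1 := le_trans hp.2.2.le (hE1 p)
    have hlt1 : N p' < E p' := lt_of_lt_of_le h3
      (by nlinarith [hE0 p', hp.2.1, hNp1])
    have hlt2 : N p' < N p := lt_of_lt_of_le h3
      (by nlinarith [hE0 p', hE1 p', hp.2.1])
    exact ⟨p', ⟨h1, h2, hlt1⟩, hlt2⟩
  let F : ℕ → {p : (Fin m → ℤ) × ℕ // Good p} := fun k =>
    Nat.rec ⟨Classical.choose base, Classical.choose_spec base⟩
      (fun _ ih => ⟨Classical.choose (step ih.1 ih.2),
        (Classical.choose_spec (step ih.1 ih.2)).1⟩) k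
  set seq : ℕ → (Fin m → ℤ) × ℕ := fun k => (F k).1 with hseqdef
  have hGood : ∀ k, Good (seq k) := fun k => (F k).2
  have hdec : ∀ k, N (seq (k+1)) < N (seq k) := by
    intro k
    exact (Classical.choose_spec (step (F k).1 (F k).2)).2
  have hanti : StrictAnti fun k => N (seq k) := strictAnti_nat_of_succ_lt hdec
  have hinj : Function.Injective seq := fun a b hab =>
    hanti.injective (congrArg N hab)
  set u : (Fin m → ℤ) → ℕ → ℂ :=
    fun τ j => if (τ, j) ∈ Set.range seq then 1 else 0 with hudef
  have hu1 : ∀ τ j, (τ, j) ∈ Set.range seq → u τ j = 1 := by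
    intro τ j h; rw [hudef]; exact if_pos h
  have hu0 : ∀ τ j, (τ, j) ∉ Set.range seq → u τ j = 0 := by
    intro τ j h; rw [hudef]; exact if_neg h
  set f : Fin m → (Fin m → ℤ) → ℕ → ℂ :=
    fun r τ j => ((τ r : ℂ) + ω r * lam j) * u τ j with hfdef
  refine ⟨u, f, fun r τ j => rfl, ?_, ⟨?_, ?_⟩, ?_⟩
  · -- decay of f
    intro r τ j
    rw [hfdef]
    simp only []
    by_cases h : (τ, j) ∈ Set.range seq
    · obtain ⟨k, hk⟩ := h
      rw [hu1 τ j ⟨k, hk⟩, mul_one]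
      have h1 : ‖(τ r : ℂ) + ω r * lam j‖ ≤ N (τ, j) :=
        le_ciSup (f := fun r' => ‖(τ r' : ℂ) + ω r' * lam j‖)
          (Set.Finite.bddAbove (Set.finite_range _)) r
      have h2 : N (τ, j) < E (τ, j) := by
        rw [← hk]; exact (hGood k).2.2
      calc ‖(τ r : ℂ) + ω r * lam j‖ ≤ N (τ, j) := h1
        _ ≤ E (τ, j) := h2.le
        _ = _ := rfl
    · rw [hu0 τ j h, mul_zero, norm_zero]
      exact (Real.exp_pos _).le
  · -- values in {0,1}
    intro τ j
    by_cases h : (τ, j) ∈ Set.range seq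
    · right; exact hu1 τ j h
    · left; exact hu0 τ j h
  · -- infinitely many ones
    have hsub : Set.range seq ⊆ {p : (Fin m → ℤ) × ℕ | u p.1 p.2 = 1} := by
      rintro ⟨τ, j⟩ h
      exact hu1 τ j h
    exact (Set.infinite_range_of_injective hinj).mono hsub
  · -- no Gelfand–Shilov decay
    intro σ' hσ' ε' hε' C hC
    set K : ℝ := max 1 (Real.log C / ε' + 1) with hKdef
    have hK1 : (1:ℝ) ≤ K := le_max_left _ _
    have hK0 : (0:ℝ) ≤ K := le_trans zero_le_one hK1
    have hlogK : Real.log C < ε' * K := by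
      have h1 : Real.log C / ε' + 1 ≤ K := le_max_right _ _
      have h2 : ε' * (Real.log C / ε') = Real.log C := by field_simp
      nlinarith
    obtain ⟨B, hB⟩ := exists_nat_ge (max (K ^ σ') (K ^ (2 * (n:ℝ) * μ)))
    have hB1 : K ^ σ' ≤ (B:ℝ) := le_trans (le_max_left _ _) hB
    have hB2 : K ^ (2 * (n:ℝ) * μ) ≤ (B:ℝ) := le_trans (le_max_right _ _) hB
    -- a chosen point outside the box of size B
    set T : Set ((Fin m → ℤ) × ℕ) :=
      {p | (∀ r, |p.1 r| ≤ (B:ℤ)) ∧ p.2 ≤ B} with hTdef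
    have hTfin : T.Finite := by
      have hsub : T ⊆ (Set.pi Set.univ fun _ : Fin m => Set.Icc (-(B:ℤ)) (B:ℤ)) ×ˢ
          Set.Iic B := by
        rintro ⟨τ, j⟩ ⟨h1, h2⟩
        exact ⟨fun r _ => abs_le.mp (h1 r), h2⟩
      exact Set.Finite.subset ((Set.Finite.pi fun _ => Set.finite_Icc _ _).prod
        (Set.finite_Iic B)) hsub
    have hex : ∃ p ∈ Set.range seq, p ∉ T := by
      by_contra h
      push_neg at h
      exact (Set.infinite_range_of_injective hinj) (hTfin.subset h)
    obtain ⟨p, ⟨k, hk⟩, hpT⟩ := hex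
    have hj1 : 1 ≤ p.2 := by have := (hGood k).1; rwa [hk] at this
    refine ⟨p.1, p.2, hj1, ?_⟩
    rw [hu1 p.1 p.2 ⟨k, hk.trans Prod.mk.eta.symm⟩, norm_one]
    -- lower bound on the weight
    have hAK : K ≤ (⨆ r, |(p.1 r : ℝ)|) ^ (1 / σ') + (p.2 : ℝ) ^ q := by
      simp only [hTdef, Set.mem_setOf_eq, not_and_or, not_forall, not_le] at hpT
      rcases hpT with ⟨r, hr⟩ | hj
      · -- large τ
        have h1 : (B:ℝ) ≤ ⨆ r', |(p.1 r' : ℝ)| := by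
          refine le_trans ?_ (le_ciSup (f := fun r' => |(p.1 r' : ℝ)|)
            (Set.Finite.bddAbove (Set.finite_range _)) r)
          have : ((B:ℤ):ℝ) ≤ |((p.1 r : ℤ):ℝ)| := by
            rw [← Int.cast_abs]; exact_mod_cast hr.le
          simpa using this
        have h2 : K = (K ^ σ') ^ (1 / σ') := by
          rw [← Real.rpow_mul hK0, mul_one_div, div_self (by linarith : σ' ≠ 0),
            Real.rpow_one]
        have h3 : (K ^ σ') ^ (1 / σ') ≤ (⨆ r', |(p.1 r' : ℝ)|) ^ (1 / σ') :=
          Real.rpow_le_rpow (Real.rpow_nonneg hK0 _) (le_trans hB1 h1)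
            (by positivity)
        have h4 : (0:ℝ) ≤ (p.2 : ℝ) ^ q :=
          Real.rpow_nonneg (Nat.cast_nonneg _) _
        linarith [h2.le.trans h3]
      · -- large j
        have h1 : (B:ℝ) ≤ (p.2 : ℝ) := by exact_mod_cast hj.le
        have h2 : K = (K ^ (2 * (n:ℝ) * μ)) ^ q := by
          rw [hqdef, ← Real.rpow_mul hK0, mul_one_div, div_self hden.ne',
            Real.rpow_one]
        have h3 : (K ^ (2 * (n:ℝ) * μ)) ^ q ≤ (p.2 : ℝ) ^ q :=
          Real.rpow_le_rpow (Real.rpow_nonneg hK0 _) (le_trans hB2 h1) hq0.le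
        have h4 : (0:ℝ) ≤ (⨆ r', |(p.1 r' : ℝ)|) ^ (1 / σ') :=
          Real.rpow_nonneg (hsup0 p.1) _
        linarith [h2.le.trans h3]
    set A' : ℝ := (⨆ r, |(p.1 r : ℝ)|) ^ (1 / σ') + (p.2 : ℝ) ^ q with hA'def
    have hCA : C < Real.exp (ε' * A') := by
      have h1 : Real.log C < ε' * A' := lt_of_lt_of_le hlogK
        (mul_le_mul_of_nonneg_left hAK hε'.le)
      calc C = Real.exp (Real.log C) := (Real.exp_log hC).symm
        _ < Real.exp (ε' * A') := Real.exp_lt_exp.mpr h1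
    have hfin : C * Real.exp (-ε' * A') < 1 := by
      have h2 : Real.exp (ε' * A') * Real.exp (-ε' * A') = 1 := by
        rw [← Real.exp_add, show ε' * A' + -ε' * A' = 0 by ring, Real.exp_zero]
      have h5 := mul_lt_mul_of_pos_right hCA (Real.exp_pos (-ε' * A'))
      rwa [h2] at h5
    exact not_le.mpr hfin
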